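/- The limit as n → ∞ of 4 + 4·∑_{k=1}^{n-1} (-1)^k · cos((2k-1)π/(4n-2)) equals 2. -/

import Mathlib

open Real Filter Finset

lemma sum_closed_form (n : ℕ) (hn : 2 ≤ n) :
    (4 + 4 * ∑ k ∈ Finset.Icc 1 (n - 1),
        (-1 : ℝ) ^ k * Real.cos ((2 * (k : ℝ) - 1) * Real.pi / (4 * (n : ℝ) - 2)))
    = 4 + 2 * ((-1 : ℝ) ^ (n - 1) * Real.sin (Real.pi / (4 * (n : ℝ) - 2)) - 1)
        / Real.cos (Real.pi / (4 * (n : ℝ) - 2)) := by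
  have hn2 : (2 : ℝ) ≤ (n : ℝ) := by exact_mod_cast hn
  set θ : ℝ := Real.pi / (4 * (n : ℝ) - 2) with hθ
  have hden : (0 : ℝ) < 4 * (n : ℝ) - 2 := by linarith
  have hθpos : 0 < θ := div_pos Real.pi_pos hden
  have hθlt : θ < Real.pi / 2 := by
    rw [hθ, div_lt_div_iff₀ hden two_pos]
    nlinarith [Real.pi_pos]
  have hcos : 0 < Real.cos θ :=
    Real.cos_pos_of_mem_Ioo ⟨by linarith, hθlt⟩
  have hcosne : Real.cos θ ≠ 0 := ne_of_gt hcos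
  -- telescoping function
  set F : ℕ → ℝ := fun j => (-1 : ℝ) ^ j * Real.cos (2 * (j : ℝ) * θ) / (2 * Real.cos θ)
    with hF
  have hterm : ∀ i : ℕ,
      (-1 : ℝ) ^ (1 + i) * Real.cos ((2 * ((1 + i : ℕ) : ℝ) - 1) * Real.pi / (4 * (n : ℝ) - 2))
        = F (i + 1) - F i := by
    intro i
    have hcast : ((1 + i : ℕ) : ℝ) = (i : ℝ) + 1 := by push_cast; ring
    have harg : (2 * ((1 + i : ℕ) : ℝ) - 1) * Real.pi / (4 * (n : ℝ) - 2)
        = (2 * (i : ℝ) + 1) * θ := by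
      rw [hcast, hθ]; ring
    have hid : Real.cos (2 * ((i : ℝ) + 1) * θ) + Real.cos (2 * (i : ℝ) * θ)
        = 2 * Real.cos ((2 * (i : ℝ) + 1) * θ) * Real.cos θ := by
      have h1 : 2 * ((i : ℝ) + 1) * θ = (2 * (i : ℝ) + 1) * θ + θ := by ring
      have h2 : 2 * (i : ℝ) * θ = (2 * (i : ℝ) + 1) * θ - θ := by ring
      rw [h1, h2, Real.cos_add, Real.cos_sub]; ring
    rw [harg, hF]
    simp only
    have hpow : (-1 : ℝ) ^ (1 + i) = -(-1 : ℝ) ^ i := by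
      rw [pow_add]; ring
    have hpow2 : (-1 : ℝ) ^ (i + 1) = -(-1 : ℝ) ^ i := by
      rw [pow_add]; ring
    push_cast
    rw [hpow, hpow2]
    field_simp
    rw [show 2 * θ * ((i : ℝ) + 1) = 2 * ((i : ℝ) + 1) * θ by ring]
    linear_combination hid
  have hsum : ∑ k ∈ Finset.Icc 1 (n - 1),
      (-1 : ℝ) ^ k * Real.cos ((2 * (k : ℝ) - 1) * Real.pi / (4 * (n : ℝ) - 2))
      = F (n - 1) - F 0 := by
    have hIcc : Finset.Icc 1 (n - 1) = Finset.Ico 1 n := by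
      rw [← Finset.Ico_add_one_right_eq_Icc]
      congr 1
      omega
    rw [hIcc, Finset.sum_Ico_eq_sum_range]
    calc ∑ i ∈ Finset.range (n - 1),
          (-1 : ℝ) ^ (1 + i) * Real.cos ((2 * ((1 + i : ℕ) : ℝ) - 1) * Real.pi / (4 * (n : ℝ) - 2))
        = ∑ i ∈ Finset.range (n - 1), (F (i + 1) - F i) := by
          exact Finset.sum_congr rfl fun i _ => hterm i
      _ = F (n - 1) - F 0 := Finset.sum_range_sub F (n - 1)
  have hF0 : F 0 = 1 / (2 * Real.cos θ) := by
    simp [hF]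
  have hcosval : Real.cos (2 * ((n - 1 : ℕ) : ℝ) * θ) = Real.sin θ := by
    have hcast : ((n - 1 : ℕ) : ℝ) = (n : ℝ) - 1 := by
      have : 1 ≤ n := by omega
      push_cast [this]; ring
    have harg : 2 * ((n : ℝ) - 1) * θ = Real.pi / 2 - θ := by
      rw [hθ]
      linear_combination (Real.pi / 2) * mul_inv_cancel₀ hden.ne'
    rw [hcast, harg, Real.cos_pi_div_two_sub]
  rw [hsum, hF0]
  rw [hF]
  simp only
  rw [hcosval]
  field_simp
  ring

theorem stmt1 :
    Tendsto (fun n : ℕ =>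
      4 + 4 * ∑ k ∈ Finset.Icc 1 (n - 1),
        (-1 : ℝ) ^ k * Real.cos ((2 * (k : ℝ) - 1) * Real.pi / (4 * (n : ℝ) - 2)))
      atTop (nhds 2) := by
  have hθ0 : Tendsto (fun n : ℕ => Real.pi / (4 * (n : ℝ) - 2)) atTop (nhds 0) := by
    apply Tendsto.div_atTop tendsto_const_nhds
    apply Filter.tendsto_atTop_add_const_right
    exact Tendsto.const_mul_atTop four_pos tendsto_natCast_atTop_atTop
  have hsin : Tendsto (fun n : ℕ => Real.sin (Real.pi / (4 * (n : ℝ) - 2))) atTop (nhds 0) := by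
    have := (Real.continuous_sin.tendsto 0).comp hθ0
    simpa [Function.comp_def] using this
  have hcos : Tendsto (fun n : ℕ => Real.cos (Real.pi / (4 * (n : ℝ) - 2))) atTop (nhds 1) := by
    have := (Real.continuous_cos.tendsto 0).comp hθ0
    simpa [Function.comp_def] using this
  have hsgn : Tendsto (fun n : ℕ => (-1 : ℝ) ^ (n - 1) * Real.sin (Real.pi / (4 * (n : ℝ) - 2)))
      atTop (nhds 0) := by
    refine squeeze_zero_norm (a := fun n : ℕ => |Real.sin (Real.pi / (4 * (n : ℝ) - 2))|)
      (fun n => ?_) ?_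
    · rw [norm_mul, norm_pow]
      simp
    · have := (continuous_abs.tendsto 0).comp hsin
      simpa [Function.comp_def] using this
  have hlim : Tendsto (fun n : ℕ =>
      4 + 2 * ((-1 : ℝ) ^ (n - 1) * Real.sin (Real.pi / (4 * (n : ℝ) - 2)) - 1)
        / Real.cos (Real.pi / (4 * (n : ℝ) - 2))) atTop (nhds 2) := by
    have h : Tendsto (fun n : ℕ =>
        2 * ((-1 : ℝ) ^ (n - 1) * Real.sin (Real.pi / (4 * (n : ℝ) - 2)) - 1)
          / Real.cos (Real.pi / (4 * (n : ℝ) - 2))) atTop (nhds (-2)) := by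
      have hnum : Tendsto (fun n : ℕ =>
          2 * ((-1 : ℝ) ^ (n - 1) * Real.sin (Real.pi / (4 * (n : ℝ) - 2)) - 1))
          atTop (nhds (-2)) := by
        have := (hsgn.sub_const 1).const_mul 2
        simpa using this
      have := hnum.div hcos one_ne_zero
      simpa [Pi.div_def] using this
    have := (tendsto_const_nhds (x := (4 : ℝ)) (f := atTop (α := ℕ))).add h
    norm_num at this
    exact this
  apply hlim.congr' -- wrong direction? fix with symm below
  filter_upwards [eventually_ge_atTop 2] with n hn
  exact (sum_closed_form n hn).symm
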